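/- arXiv:2004.02821 — 2 statements merged into one kernel-verified Lean document; each statement's English description precedes it below -/
import Mathlib

section
/- Let N ≥ 2 and ℓ, M₀ be positive integers. The assignment ψᵢ^{kℓ+p}(n) ↦ ψᵢ^{p}(M₀n − k) and ψ̄ᵢ^{kℓ+p}(n) ↦ ψ̄ᵢ^{p}(M₀n + k), for 1 ≤ i ≤ N, 0 ≤ k ≤ M₀−1, 1 ≤ p ≤ ℓ, n ∈ ℤ, extends uniquely to a ℂ-algebra isomorphism φ: 𝒞_N^{M₀ℓ} → 𝒞_N^ℓ. Moreover, the 𝒞_N^{M₀ℓ}-module obtained from the Fock space 𝓕_N^ℓ by restricting along φ is isomorphic to the Fock space 𝓕_N^{M₀ℓ}, via the unique linear isomorphism sending |0⟩ to |0⟩ and intertwining the 𝒞_N^{M₀ℓ}-actions. -/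
/-- Generators of the Clifford algebra `𝒞_N^ℓ`: `ψᵢᵖ(m)` and `ψ̄ᵢᵖ(m)` for
`1 ≤ i ≤ N`, `1 ≤ p ≤ ℓ`, `m ∈ ℤ`. -/
inductive CGen (N ℓ : ℕ) : Type
  | psi  (i : Fin N) (p : Fin ℓ) (m : ℤ) : CGen N ℓ
  | psib (i : Fin N) (p : Fin ℓ) (m : ℤ) : CGen N ℓ

/-- The Clifford (CAR) relations among the generators. -/
inductive CRel (N ℓ : ℕ) :
    FreeAlgebra ℂ (CGen N ℓ) → FreeAlgebra ℂ (CGen N ℓ) → Prop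
  | anti_pp (i j : Fin N) (p r : Fin ℓ) (m n : ℤ) :
      CRel N ℓ (FreeAlgebra.ι ℂ (CGen.psi i p m) * FreeAlgebra.ι ℂ (CGen.psi j r n)
        + FreeAlgebra.ι ℂ (CGen.psi j r n) * FreeAlgebra.ι ℂ (CGen.psi i p m)) 0
  | anti_bb (i j : Fin N) (p r : Fin ℓ) (m n : ℤ) :
      CRel N ℓ (FreeAlgebra.ι ℂ (CGen.psib i p m) * FreeAlgebra.ι ℂ (CGen.psib j r n)
        + FreeAlgebra.ι ℂ (CGen.psib j r n) * FreeAlgebra.ι ℂ (CGen.psib i p m)) 0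
  | mixed (i j : Fin N) (p r : Fin ℓ) (m n : ℤ) :
      CRel N ℓ (FreeAlgebra.ι ℂ (CGen.psi i p m) * FreeAlgebra.ι ℂ (CGen.psib j r n)
        + FreeAlgebra.ι ℂ (CGen.psib j r n) * FreeAlgebra.ι ℂ (CGen.psi i p m))
        (if i = j ∧ p = r ∧ m + n = 0 then 1 else 0)

/-- The Clifford algebra `𝒞_N^ℓ`, presented by generators and relations. -/
abbrev CliffordNL (N ℓ : ℕ) : Type := RingQuot (CRel N ℓ)

/-- The generator `ψᵢᵖ(m)` of `𝒞_N^ℓ`. -/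
noncomputable def cPsi {N ℓ : ℕ} (i : Fin N) (p : Fin ℓ) (m : ℤ) : CliffordNL N ℓ :=
  RingQuot.mkAlgHom ℂ (CRel N ℓ) (FreeAlgebra.ι ℂ (CGen.psi i p m))

/-- The generator `ψ̄ᵢᵖ(m)` of `𝒞_N^ℓ`. -/
noncomputable def cPsib {N ℓ : ℕ} (i : Fin N) (p : Fin ℓ) (m : ℤ) : CliffordNL N ℓ :=
  RingQuot.mkAlgHom ℂ (CRel N ℓ) (FreeAlgebra.ι ℂ (CGen.psib i p m))

/-- The left ideal of annihilation operators: generated by the `ψᵢᵖ(m)` with `m ≥ 1` and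
the `ψ̄ᵢᵖ(m)` with `m ≥ 0`. -/
noncomputable def fockIdeal (N ℓ : ℕ) : Submodule (CliffordNL N ℓ) (CliffordNL N ℓ) :=
  Submodule.span (CliffordNL N ℓ)
    {x | ∃ (i : Fin N) (p : Fin ℓ) (m : ℤ),
      (1 ≤ m ∧ x = cPsi i p m) ∨ (0 ≤ m ∧ x = cPsib i p m)}

/-- The fermionic Fock space `𝓕_N^ℓ`, as the quotient of `𝒞_N^ℓ` by the left ideal of
annihilation operators; it is a cyclic `𝒞_N^ℓ`-module. -/
abbrev FockNL (N ℓ : ℕ) : Type := CliffordNL N ℓ ⧸ fockIdeal N ℓ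

/-- The vacuum vector `|0⟩ ∈ 𝓕_N^ℓ`. -/
noncomputable def fockVac (N ℓ : ℕ) : FockNL N ℓ :=
  Submodule.Quotient.mk (1 : CliffordNL N ℓ)

/-- The normally ordered product `:ψᵢᵖ(m) ψ̄ⱼʳ(n):`. -/
noncomputable def nord {N ℓ : ℕ} (i j : Fin N) (p r : Fin ℓ) (m n : ℤ) : CliffordNL N ℓ :=
  if 0 ≤ n then cPsi i p m * cPsib j r n else -(cPsib j r n * cPsi i p m)

/-- The index `kℓ + p` in `Fin (M₀ * ℓ)` associated to `k : Fin M₀` and `p : Fin ℓ`. -/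
def mixIdx {M0 ℓ : ℕ} (k : Fin M0) (p : Fin ℓ) : Fin (M0 * ℓ) :=
  ⟨k.1 * ℓ + p.1, by
    calc k.1 * ℓ + p.1 < k.1 * ℓ + ℓ := by omega
    _ = (k.1 + 1) * ℓ := by ring
    _ ≤ M0 * ℓ := Nat.mul_le_mul_right ℓ k.isLt⟩

namespace CDaux

variable {N ℓ M0 : ℕ}

lemma cPsi_mul_cPsib (i j : Fin N) (p r : Fin ℓ) (m n : ℤ) :
    cPsi i p m * cPsib j r n + cPsib j r n * cPsi i p m
      = if i = j ∧ p = r ∧ m + n = 0 then (1 : CliffordNL N ℓ) else 0 := by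
  have h := RingQuot.mkAlgHom_rel ℂ (CRel.mixed i j p r m n)
  rw [map_add, map_mul, map_mul, apply_ite (RingQuot.mkAlgHom ℂ (CRel N ℓ)), map_one,
    map_zero] at h
  exact h

lemma cPsi_anti (i j : Fin N) (p r : Fin ℓ) (m n : ℤ) :
    cPsi i p m * cPsi j r n + cPsi j r n * cPsi i p m = (0 : CliffordNL N ℓ) := by
  have h := RingQuot.mkAlgHom_rel ℂ (CRel.anti_pp i j p r m n)
  rw [map_add, map_mul, map_mul, map_zero] at h
  exact h

lemma cPsib_anti (i j : Fin N) (p r : Fin ℓ) (m n : ℤ) :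
    cPsib i p m * cPsib j r n + cPsib j r n * cPsib i p m = (0 : CliffordNL N ℓ) := by
  have h := RingQuot.mkAlgHom_rel ℂ (CRel.anti_bb i j p r m n)
  rw [map_add, map_mul, map_mul, map_zero] at h
  exact h

/-- key integer lemma -/
lemma key {M a k k' : ℤ} (h0 : 0 < M) (hk : 0 ≤ k) (hk2 : k < M) (hk' : 0 ≤ k')
    (hk'2 : k' < M) : M * a + k' - k = 0 ↔ a = 0 ∧ k = k' := by
  constructor
  · intro h
    have hd : M ∣ (k - k') := ⟨a, by linarith⟩
    have h0' : k - k' = 0 := Int.eq_zero_of_abs_lt_dvd hd (abs_lt.mpr ⟨by linarith, by linarith⟩)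
    have ha : M * a = 0 := by linarith
    rcases mul_eq_zero.mp ha with h' | h'
    · omega
    · exact ⟨h', by linarith⟩
  · rintro ⟨rfl, rfl⟩; ring

lemma emod_ediv {M : ℕ} (hM : 0 < M) (a b : ℤ) (hb : 0 ≤ b) (hb2 : b < M) :
    ((M : ℤ) * a + b) % M = b ∧ ((M : ℤ) * a + b) / M = a := by
  have hM' : (M : ℤ) ≠ 0 := by exact_mod_cast hM.ne'
  constructor
  · rw [add_comm, Int.add_mul_emod_self_left, Int.emod_eq_of_lt hb hb2]
  · rw [add_comm, Int.add_mul_ediv_left _ _ hM', Int.ediv_eq_zero_of_lt hb hb2, zero_add]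

lemma mix_mod (hl : 0 < ℓ) (k : Fin M0) (p : Fin ℓ) : (mixIdx k p).1 % ℓ = p.1 := by
  show (k.1 * ℓ + p.1) % ℓ = p.1
  rw [mul_comm, Nat.mul_add_mod, Nat.mod_eq_of_lt p.isLt]

lemma mix_div (hl : 0 < ℓ) (k : Fin M0) (p : Fin ℓ) : (mixIdx k p).1 / ℓ = k.1 := by
  show (k.1 * ℓ + p.1) / ℓ = k.1
  rw [mul_comm, Nat.mul_add_div hl, Nat.div_eq_of_lt p.isLt, add_zero]

lemma div_lt (hl : 0 < ℓ) (q : Fin (M0 * ℓ)) : q.1 / ℓ < M0 :=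
  Nat.div_lt_of_lt_mul (lt_of_lt_of_le q.isLt (le_of_eq (mul_comm M0 ℓ)))

lemma mix_surj (hl : 0 < ℓ) (q : Fin (M0 * ℓ)) :
    q = mixIdx ⟨q.1 / ℓ, div_lt hl q⟩ ⟨q.1 % ℓ, Nat.mod_lt _ hl⟩ := by
  apply Fin.ext
  show q.1 = q.1 / ℓ * ℓ + q.1 % ℓ
  conv_lhs => rw [← Nat.div_add_mod q.1 ℓ]
  ring



/-- generator map forward: big -> small -/
noncomputable def fwdGen (hl : 0 < ℓ) (M0 : ℕ) : CGen N (M0 * ℓ) → CliffordNL N ℓ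
  | .psi i q n => cPsi i ⟨q.1 % ℓ, Nat.mod_lt _ hl⟩ ((M0 : ℤ) * n - (q.1 / ℓ : ℕ))
  | .psib i q n => cPsib i ⟨q.1 % ℓ, Nat.mod_lt _ hl⟩ ((M0 : ℤ) * n + (q.1 / ℓ : ℕ))

lemma fwd_cond (hl : 0 < ℓ) (hM : 0 < M0) (q r : Fin (M0 * ℓ)) (m n : ℤ) :
    ((⟨q.1 % ℓ, Nat.mod_lt _ hl⟩ : Fin ℓ) = ⟨r.1 % ℓ, Nat.mod_lt _ hl⟩ ∧
      ((M0 : ℤ) * m - (q.1 / ℓ : ℕ)) + ((M0 : ℤ) * n + (r.1 / ℓ : ℕ)) = 0)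
    ↔ (q = r ∧ m + n = 0) := by
  have hq := div_lt hl q
  have hr := div_lt hl r
  have e : ((M0 : ℤ) * m - (q.1 / ℓ : ℕ)) + ((M0 : ℤ) * n + (r.1 / ℓ : ℕ))
      = (M0 : ℤ) * (m + n) + (r.1 / ℓ : ℕ) - (q.1 / ℓ : ℕ) := by ring
  rw [Fin.mk.injEq, e, key (by exact_mod_cast hM) (by positivity) (by exact_mod_cast hq)
    (by positivity) (by exact_mod_cast hr), Fin.ext_iff]
  constructor
  · rintro ⟨h1, h2, h3⟩
    have h3' : q.1 / ℓ = r.1 / ℓ := by exact_mod_cast h3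
    refine ⟨?_, h2⟩
    conv_lhs => rw [← Nat.div_add_mod q.1 ℓ]
    conv_rhs => rw [← Nat.div_add_mod r.1 ℓ]
    rw [h1, h3']
  · rintro ⟨h1, h2⟩
    exact ⟨by rw [h1], h2, by rw [h1]⟩

lemma fwd_rel (hl : 0 < ℓ) (hM : 0 < M0) :
    ∀ ⦃x y⦄, CRel N (M0 * ℓ) x y →
      FreeAlgebra.lift ℂ (fwdGen hl M0) x = FreeAlgebra.lift ℂ (fwdGen hl M0) y := by
  intro x y h
  induction h with
  | anti_pp i j q r m n =>
      simp only [map_add, map_mul, FreeAlgebra.lift_ι_apply, map_zero, fwdGen]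
      exact cPsi_anti ..
  | anti_bb i j q r m n =>
      simp only [map_add, map_mul, FreeAlgebra.lift_ι_apply, map_zero, fwdGen]
      exact cPsib_anti ..
  | mixed i j q r m n =>
      simp only [map_add, map_mul, FreeAlgebra.lift_ι_apply, fwdGen,
        apply_ite (FreeAlgebra.lift ℂ (fwdGen hl M0)), map_one, map_zero]
      rw [cPsi_mul_cPsib]
      exact if_congr (and_congr Iff.rfl (fwd_cond hl hM q r m n)) rfl rfl

/-- the forward algebra hom -/
noncomputable def fwd (hl : 0 < ℓ) (hM : 0 < M0) :
    CliffordNL N (M0 * ℓ) →ₐ[ℂ] CliffordNL N ℓ :=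
  RingQuot.liftAlgHom ℂ ⟨FreeAlgebra.lift ℂ (fwdGen hl M0), fwd_rel hl hM⟩

lemma fwd_cPsi (hl : 0 < ℓ) (hM : 0 < M0) (i : Fin N) (q : Fin (M0 * ℓ)) (n : ℤ) :
    fwd hl hM (cPsi i q n) = cPsi i ⟨q.1 % ℓ, Nat.mod_lt _ hl⟩ ((M0 : ℤ) * n - (q.1 / ℓ : ℕ)) := by
  rw [cPsi, fwd, RingQuot.liftAlgHom_mkAlgHom_apply, FreeAlgebra.lift_ι_apply]
  rfl

lemma fwd_cPsib (hl : 0 < ℓ) (hM : 0 < M0) (i : Fin N) (q : Fin (M0 * ℓ)) (n : ℤ) :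
    fwd hl hM (cPsib i q n) = cPsib i ⟨q.1 % ℓ, Nat.mod_lt _ hl⟩ ((M0 : ℤ) * n + (q.1 / ℓ : ℕ)) := by
  rw [cPsib, fwd, RingQuot.liftAlgHom_mkAlgHom_apply, FreeAlgebra.lift_ι_apply]
  rfl



lemma kBound {M : ℕ} (hM : 0 < M) (m : ℤ) : (m % (M : ℤ)).toNat < M := by
  have h1 := Int.emod_nonneg m (by exact_mod_cast hM.ne' : (M : ℤ) ≠ 0)
  have h2 := Int.emod_lt_of_pos m (by exact_mod_cast hM : (0 : ℤ) < M)
  omega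

/-- generator map backward: small -> big -/
noncomputable def bwdGen (hM : 0 < M0) : CGen N ℓ → CliffordNL N (M0 * ℓ)
  | .psi i p m => cPsi i (mixIdx ⟨((-m) % (M0 : ℤ)).toNat, kBound hM (-m)⟩ p) (-((-m) / M0))
  | .psib i p m => cPsib i (mixIdx ⟨(m % (M0 : ℤ)).toNat, kBound hM m⟩ p) (m / M0)

lemma decomp_psi (hM : 0 < M0) (m : ℤ) :
    (M0 : ℤ) * (-((-m) / M0)) - (((-m) % (M0 : ℤ)).toNat : ℤ) = m := by
  have h1 := Int.emod_nonneg (-m) (by exact_mod_cast hM.ne' : (M0 : ℤ) ≠ 0)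
  have h2 := Int.mul_ediv_add_emod (-m) (M0 : ℤ)
  rw [mul_neg]
  omega

lemma decomp_psib (hM : 0 < M0) (m : ℤ) :
    (M0 : ℤ) * (m / M0) + ((m % (M0 : ℤ)).toNat : ℤ) = m := by
  have h1 := Int.emod_nonneg m (by exact_mod_cast hM.ne' : (M0 : ℤ) ≠ 0)
  have h2 := Int.mul_ediv_add_emod m (M0 : ℤ)
  omega

lemma mixIdx_inj (hl : 0 < ℓ) {k k' : Fin M0} {p p' : Fin ℓ} :
    mixIdx k p = mixIdx k' p' ↔ k = k' ∧ p = p' := by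
  constructor
  · intro h
    have h1 : (mixIdx k p).1 = (mixIdx k' p').1 := congrArg Fin.val h
    constructor
    · apply Fin.ext; rw [← mix_div hl k p, ← mix_div hl k' p', h1]
    · apply Fin.ext; rw [← mix_mod hl k p, ← mix_mod hl k' p', h1]
  · rintro ⟨rfl, rfl⟩; rfl

lemma bwd_cond (hl : 0 < ℓ) (hM : 0 < M0) (p p' : Fin ℓ) (m n : ℤ) :
    (mixIdx ⟨((-m) % (M0 : ℤ)).toNat, kBound hM (-m)⟩ p
        = mixIdx ⟨(n % (M0 : ℤ)).toNat, kBound hM n⟩ p' ∧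
      (-((-m) / (M0 : ℤ))) + n / (M0 : ℤ) = 0)
    ↔ (p = p' ∧ m + n = 0) := by
  rw [mixIdx_inj hl]
  have hdm := decomp_psi hM m
  have hdn := decomp_psib hM n
  set k : ℤ := (((-m) % (M0 : ℤ)).toNat : ℤ) with hk
  set k' : ℤ := ((n % (M0 : ℤ)).toNat : ℤ) with hk'
  set a : ℤ := -((-m) / (M0 : ℤ)) with ha
  set b : ℤ := n / (M0 : ℤ) with hb
  have hkb : k < M0 := by have := kBound hM (-m); omega
  have hk'b : k' < M0 := by have := kBound hM n; omega
  have hkn : 0 ≤ k := by positivity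
  have hk'n : 0 ≤ k' := by positivity
  have e : m + n = (M0 : ℤ) * (a + b) + k' - k := by rw [← hdm, ← hdn]; ring
  constructor
  · rintro ⟨⟨hkk, hpp⟩, hab⟩
    refine ⟨hpp, ?_⟩
    rw [e, hab]
    have : k = k' := by
      have h := Fin.mk_eq_mk.mp hkk
      omega
    omega
  · rintro ⟨hpp, hmn⟩
    rw [e] at hmn
    obtain ⟨h1, h2⟩ := (key (show (0:ℤ) < M0 by exact_mod_cast hM) hkn hkb hk'n hk'b).mp hmn
    exact ⟨⟨Fin.ext (show ((-m) % (M0 : ℤ)).toNat = (n % (M0 : ℤ)).toNat by omega), hpp⟩, h1⟩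

lemma bwd_rel (hl : 0 < ℓ) (hM : 0 < M0) :
    ∀ ⦃x y⦄, CRel N ℓ x y →
      FreeAlgebra.lift ℂ (bwdGen (ℓ := ℓ) hM) x = FreeAlgebra.lift ℂ (bwdGen hM) y := by
  intro x y h
  induction h with
  | anti_pp i j p r m n =>
      simp only [map_add, map_mul, FreeAlgebra.lift_ι_apply, map_zero, bwdGen]
      exact cPsi_anti ..
  | anti_bb i j p r m n =>
      simp only [map_add, map_mul, FreeAlgebra.lift_ι_apply, map_zero, bwdGen]
      exact cPsib_anti ..
  | mixed i j p r m n =>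
      simp only [map_add, map_mul, FreeAlgebra.lift_ι_apply, bwdGen,
        apply_ite (FreeAlgebra.lift ℂ (bwdGen (ℓ := ℓ) (N := N) hM)), map_one, map_zero]
      rw [cPsi_mul_cPsib]
      exact if_congr (and_congr Iff.rfl (bwd_cond hl hM p r m n)) rfl rfl

noncomputable def bwd (hl : 0 < ℓ) (hM : 0 < M0) :
    CliffordNL N ℓ →ₐ[ℂ] CliffordNL N (M0 * ℓ) :=
  RingQuot.liftAlgHom ℂ ⟨FreeAlgebra.lift ℂ (bwdGen hM), bwd_rel hl hM⟩

lemma bwd_cPsi (hl : 0 < ℓ) (hM : 0 < M0) (i : Fin N) (p : Fin ℓ) (m : ℤ) :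
    bwd hl hM (cPsi i p m)
      = cPsi i (mixIdx ⟨((-m) % (M0 : ℤ)).toNat, kBound hM (-m)⟩ p) (-((-m) / M0)) := by
  rw [cPsi, bwd, RingQuot.liftAlgHom_mkAlgHom_apply, FreeAlgebra.lift_ι_apply]
  rfl

lemma bwd_cPsib (hl : 0 < ℓ) (hM : 0 < M0) (i : Fin N) (p : Fin ℓ) (m : ℤ) :
    bwd hl hM (cPsib i p m)
      = cPsib i (mixIdx ⟨(m % (M0 : ℤ)).toNat, kBound hM m⟩ p) (m / M0) := by
  rw [cPsib, bwd, RingQuot.liftAlgHom_mkAlgHom_apply, FreeAlgebra.lift_ι_apply]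
  rfl



lemma algHom_ext {a b : ℕ} {F G : CliffordNL N a →ₐ[ℂ] CliffordNL N b}
    (h : ∀ g : CGen N a,
      F (RingQuot.mkAlgHom ℂ (CRel N a) (FreeAlgebra.ι ℂ g))
        = G (RingQuot.mkAlgHom ℂ (CRel N a) (FreeAlgebra.ι ℂ g))) : F = G := by
  have hcomp : F.comp (RingQuot.mkAlgHom ℂ (CRel N a))
      = G.comp (RingQuot.mkAlgHom ℂ (CRel N a)) :=
    FreeAlgebra.hom_ext (funext fun g => h g)
  apply AlgHom.ext
  intro x
  obtain ⟨y, rfl⟩ := RingQuot.mkAlgHom_surjective ℂ (CRel N a) x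
  exact AlgHom.congr_fun hcomp y

lemma fwd_bwd (hl : 0 < ℓ) (hM : 0 < M0) :
    (fwd (N := N) hl hM).comp (bwd hl hM) = AlgHom.id ℂ (CliffordNL N ℓ) := by
  apply algHom_ext
  intro g
  cases g with
  | psi i p m =>
      show fwd hl hM (bwd hl hM (cPsi i p m)) = cPsi i p m
      rw [bwd_cPsi hl hM, fwd_cPsi hl hM]
      congr 1
      · exact Fin.ext (mix_mod hl _ p)
      · rw [mix_div hl]
        exact decomp_psi hM m
  | psib i p m =>
      show fwd hl hM (bwd hl hM (cPsib i p m)) = cPsib i p m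
      rw [bwd_cPsib hl hM, fwd_cPsib hl hM]
      congr 1
      · exact Fin.ext (mix_mod hl _ p)
      · rw [mix_div hl]
        exact decomp_psib hM m

lemma bwd_fwd (hl : 0 < ℓ) (hM : 0 < M0) :
    (bwd (N := N) hl hM).comp (fwd hl hM) = AlgHom.id ℂ (CliffordNL N (M0 * ℓ)) := by
  apply algHom_ext
  intro g
  cases g with
  | psi i q n =>
      show bwd hl hM (fwd hl hM (cPsi i q n)) = cPsi i q n
      rw [fwd_cPsi hl hM, bwd_cPsi hl hM]
      have hqd := div_lt hl q
      have hrw : -((M0 : ℤ) * n - (q.1 / ℓ : ℕ)) = (M0 : ℤ) * (-n) + (q.1 / ℓ : ℕ) := by ring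
      obtain ⟨hmod, hdiv⟩ := emod_ediv hM (-n) ((q.1 / ℓ : ℕ) : ℤ) (by positivity)
        (by exact_mod_cast hqd)
      have h1 : ((-((M0 : ℤ) * n - (q.1 / ℓ : ℕ))) % ((M0 : ℕ) : ℤ)).toNat = q.1 / ℓ := by
        rw [hrw, hmod, Int.toNat_natCast]
      have hk : (⟨((-((M0 : ℤ) * n - (q.1 / ℓ : ℕ))) % ((M0 : ℕ) : ℤ)).toNat,
          kBound hM _⟩ : Fin M0) = ⟨q.1 / ℓ, div_lt hl q⟩ := Fin.ext h1
      have h2 : -((-((M0 : ℤ) * n - (q.1 / ℓ : ℕ))) / ((M0 : ℕ) : ℤ)) = n := by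
        rw [hrw, hdiv]; ring
      rw [hk, h2, ← mix_surj hl q]
  | psib i q n =>
      show bwd hl hM (fwd hl hM (cPsib i q n)) = cPsib i q n
      rw [fwd_cPsib hl hM, bwd_cPsib hl hM]
      have hqd := div_lt hl q
      obtain ⟨hmod, hdiv⟩ := emod_ediv hM n ((q.1 / ℓ : ℕ) : ℤ) (by positivity)
        (by exact_mod_cast hqd)
      have h1 : ((((M0 : ℤ) * n + (q.1 / ℓ : ℕ))) % ((M0 : ℕ) : ℤ)).toNat = q.1 / ℓ := by
        rw [hmod, Int.toNat_natCast]
      have hk : (⟨((((M0 : ℤ) * n + (q.1 / ℓ : ℕ))) % ((M0 : ℕ) : ℤ)).toNat,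
          kBound hM _⟩ : Fin M0) = ⟨q.1 / ℓ, div_lt hl q⟩ := Fin.ext h1
      have h2 : (((M0 : ℤ) * n + (q.1 / ℓ : ℕ))) / ((M0 : ℕ) : ℤ) = n := hdiv
      rw [hk, h2, ← mix_surj hl q]

lemma fwd_spec (hl : 0 < ℓ) (hM : 0 < M0) (i : Fin N) (k : Fin M0) (p : Fin ℓ) (n : ℤ) :
    fwd hl hM (cPsi i (mixIdx k p) n) = cPsi i p ((M0 : ℤ) * n - k.1) ∧
    fwd hl hM (cPsib i (mixIdx k p) n) = cPsib i p ((M0 : ℤ) * n + k.1) := by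
  constructor
  · rw [fwd_cPsi hl hM]
    congr 1
    · exact Fin.ext (mix_mod hl k p)
    · rw [mix_div hl]
  · rw [fwd_cPsib hl hM]
    congr 1
    · exact Fin.ext (mix_mod hl k p)
    · rw [mix_div hl]

lemma fwd_unique (hl : 0 < ℓ) (hM : 0 < M0) (φ : CliffordNL N (M0 * ℓ) →ₐ[ℂ] CliffordNL N ℓ)
    (hφ : ∀ (i : Fin N) (k : Fin M0) (p : Fin ℓ) (n : ℤ),
      φ (cPsi i (mixIdx k p) n) = cPsi i p ((M0 : ℤ) * n - k.1) ∧
      φ (cPsib i (mixIdx k p) n) = cPsib i p ((M0 : ℤ) * n + k.1)) :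
    φ = fwd hl hM := by
  apply algHom_ext
  intro g
  cases g with
  | psi i q n =>
      show φ (cPsi i q n) = fwd hl hM (cPsi i q n)
      rw [mix_surj hl q]
      rw [(hφ i _ _ n).1, (fwd_spec hl hM i _ _ n).1]
  | psib i q n =>
      show φ (cPsib i q n) = fwd hl hM (cPsib i q n)
      rw [mix_surj hl q]
      rw [(hφ i _ _ n).2, (fwd_spec hl hM i _ _ n).2]



lemma map_ideal {a b : ℕ} (f : CliffordNL N a →ₐ[ℂ] CliffordNL N b)
    (hgen : ∀ x, (∃ (i : Fin N) (p : Fin a) (m : ℤ),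
        (1 ≤ m ∧ x = cPsi i p m) ∨ (0 ≤ m ∧ x = cPsib i p m)) → f x ∈ fockIdeal N b) :
    ∀ x ∈ fockIdeal N a, f x ∈ fockIdeal N b := by
  intro x hx
  refine Submodule.span_induction (p := fun y _ => f y ∈ fockIdeal N b)
    (fun y hy => hgen y hy) ?_ ?_ ?_ hx
  · show f 0 ∈ fockIdeal N b
    rw [map_zero]; exact Submodule.zero_mem _
  · intro y z _ _ hy hz
    show f (y + z) ∈ fockIdeal N b
    rw [map_add]; exact Submodule.add_mem _ hy hz
  · intro c y _ hy
    show f (c • y) ∈ fockIdeal N b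
    rw [smul_eq_mul, map_mul, ← smul_eq_mul]
    exact Submodule.smul_mem _ _ hy

lemma pos_mode {M nm k : ℤ} (h0 : 0 < M) (hk : 0 ≤ k) (h : 1 ≤ M * nm - k) : 1 ≤ nm := by
  by_contra hc
  push_neg at hc
  have hnm : nm ≤ 0 := by omega
  nlinarith

lemma fwd_ideal (hl : 0 < ℓ) (hM : 0 < M0) :
    ∀ x ∈ fockIdeal N (M0 * ℓ), fwd hl hM x ∈ fockIdeal N ℓ := by
  apply map_ideal
  rintro x ⟨i, q, m, (⟨hm, rfl⟩ | ⟨hm, rfl⟩)⟩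
  · rw [fwd_cPsi hl hM]
    apply Submodule.subset_span
    refine ⟨i, _, _, Or.inl ⟨?_, rfl⟩⟩
    have hq : ((q.1 / ℓ : ℕ) : ℤ) < M0 := by exact_mod_cast div_lt hl q
    have hM' : (1 : ℤ) ≤ M0 := by exact_mod_cast hM
    nlinarith
  · rw [fwd_cPsib hl hM]
    apply Submodule.subset_span
    refine ⟨i, _, _, Or.inr ⟨?_, rfl⟩⟩
    have hM' : (0 : ℤ) ≤ M0 := by positivity
    have : (0 : ℤ) ≤ ((q.1 / ℓ : ℕ) : ℤ) := by positivity
    nlinarith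

lemma bwd_ideal (hl : 0 < ℓ) (hM : 0 < M0) :
    ∀ x ∈ fockIdeal N ℓ, bwd hl hM x ∈ fockIdeal N (M0 * ℓ) := by
  apply map_ideal
  rintro x ⟨i, p, m, (⟨hm, rfl⟩ | ⟨hm, rfl⟩)⟩
  · rw [bwd_cPsi hl hM]
    apply Submodule.subset_span
    refine ⟨i, _, _, Or.inl ⟨?_, rfl⟩⟩
    have hd := decomp_psi hM m
    have hk : (0 : ℤ) ≤ ((((-m) % (M0 : ℤ)).toNat : ℕ) : ℤ) := by positivity
    exact pos_mode (show (0:ℤ) < M0 by exact_mod_cast hM) hk (by omega)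
  · rw [bwd_cPsib hl hM]
    apply Submodule.subset_span
    refine ⟨i, _, _, Or.inr ⟨?_, rfl⟩⟩
    exact Int.ediv_nonneg hm (by positivity)

/-- the candidate linear map on Fock spaces, before quotient -/
noncomputable def Lmap (hl : 0 < ℓ) (hM : 0 < M0) :
    CliffordNL N (M0 * ℓ) →ₗ[ℂ] FockNL N ℓ where
  toFun x := Submodule.Quotient.mk (fwd hl hM x)
  map_add' x y := by show Submodule.Quotient.mk (fwd hl hM (x + y)) = _; rw [map_add, Submodule.Quotient.mk_add]
  map_smul' c x := by
    show Submodule.Quotient.mk (fwd hl hM (c • x)) = _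
    rw [map_smul, RingHom.id_apply]
    exact Submodule.Quotient.mk_smul _ c _

/-- the Fock-space map -/
noncomputable def Phi (hl : 0 < ℓ) (hM : 0 < M0) : FockNL N (M0 * ℓ) →ₗ[ℂ] FockNL N ℓ :=
  (Submodule.liftQ ((fockIdeal N (M0 * ℓ)).restrictScalars ℂ) (Lmap hl hM)
    (fun x hx => by
      have : fwd (N := N) hl hM x ∈ fockIdeal N ℓ := fwd_ideal hl hM x hx
      simpa [LinearMap.mem_ker, Lmap, Submodule.Quotient.mk_eq_zero] using this)).comp
    (Submodule.Quotient.restrictScalarsEquiv ℂ (fockIdeal N (M0 * ℓ))).symm.toLinearMap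

lemma Phi_mk (hl : 0 < ℓ) (hM : 0 < M0) (x : CliffordNL N (M0 * ℓ)) :
    Phi hl hM (Submodule.Quotient.mk x) = Submodule.Quotient.mk (fwd hl hM x) := by
  rw [Phi, LinearMap.comp_apply, LinearEquiv.coe_toLinearMap,
    Submodule.Quotient.restrictScalarsEquiv_symm_mk, Submodule.liftQ_apply]
  rfl



lemma mk_eq_smul_vac {a : ℕ} (y : CliffordNL N a) :
    (Submodule.Quotient.mk y : FockNL N a) = y • fockVac N a := by
  rw [fockVac, ← Submodule.Quotient.mk_smul, smul_eq_mul, mul_one]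

lemma Phi_vac (hl : 0 < ℓ) (hM : 0 < M0) :
    Phi (N := N) hl hM (fockVac N (M0 * ℓ)) = fockVac N ℓ := by
  rw [fockVac, Phi_mk, map_one, fockVac]

lemma Phi_smul (hl : 0 < ℓ) (hM : 0 < M0) (x : CliffordNL N (M0 * ℓ))
    (v : FockNL N (M0 * ℓ)) : Phi hl hM (x • v) = fwd hl hM x • Phi hl hM v := by
  obtain ⟨y, rfl⟩ := Submodule.Quotient.mk_surjective _ v
  rw [← Submodule.Quotient.mk_smul, smul_eq_mul, Phi_mk, Phi_mk, map_mul, ← smul_eq_mul,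
    Submodule.Quotient.mk_smul]

lemma Phi_unique (hl : 0 < ℓ) (hM : 0 < M0) (Φ : FockNL N (M0 * ℓ) →ₗ[ℂ] FockNL N ℓ)
    (h1 : Φ (fockVac N (M0 * ℓ)) = fockVac N ℓ)
    (h2 : ∀ (x : CliffordNL N (M0 * ℓ)) (v : FockNL N (M0 * ℓ)),
      Φ (x • v) = fwd hl hM x • Φ v) : Φ = Phi hl hM := by
  apply LinearMap.ext
  intro v
  obtain ⟨y, rfl⟩ := Submodule.Quotient.mk_surjective _ v
  rw [mk_eq_smul_vac, h2, h1, Phi_smul, Phi_vac]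

lemma Phi_bijective (hl : 0 < ℓ) (hM : 0 < M0) :
    Function.Bijective (Phi (N := N) hl hM) := by
  constructor
  · have hzero : ∀ v, Phi (N := N) hl hM v = 0 → v = 0 := by
      intro v hv
      obtain ⟨y, rfl⟩ := Submodule.Quotient.mk_surjective _ v
      rw [Phi_mk, Submodule.Quotient.mk_eq_zero] at hv
      rw [Submodule.Quotient.mk_eq_zero]
      have : bwd hl hM (fwd hl hM y) ∈ fockIdeal N (M0 * ℓ) := bwd_ideal hl hM _ hv
      rwa [← AlgHom.comp_apply, bwd_fwd hl hM, AlgHom.id_apply] at this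
    intro v w hvw
    have : Phi (N := N) hl hM (v - w) = 0 := by rw [map_sub, hvw, sub_self]
    have := hzero _ this
    exact sub_eq_zero.mp this
  · intro w
    obtain ⟨z, rfl⟩ := Submodule.Quotient.mk_surjective _ w
    refine ⟨Submodule.Quotient.mk (bwd hl hM z), ?_⟩
    rw [Phi_mk, ← AlgHom.comp_apply, fwd_bwd hl hM, AlgHom.id_apply]

end CDaux

/-- the assignment `ψᵢ^{kℓ+p}(n) ↦ ψᵢᵖ(M₀n - k)`,
`ψ̄ᵢ^{kℓ+p}(n) ↦ ψ̄ᵢᵖ(M₀n + k)` extends uniquely to a `ℂ`-algebra isomorphism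
`φ : 𝒞_N^{M₀ℓ} → 𝒞_N^ℓ`, and the `𝒞_N^{M₀ℓ}`-module obtained from `𝓕_N^ℓ` by restriction
along `φ` is isomorphic to `𝓕_N^{M₀ℓ}` via the unique linear map sending `|0⟩` to `|0⟩`
and intertwining the `𝒞_N^{M₀ℓ}`-actions; moreover this map is bijective. -/
theorem clifford_decomposition_iso (N : ℕ) (hN : 2 ≤ N) (ℓ M0 : ℕ) (hℓ : 0 < ℓ)
    (hM0 : 0 < M0) :
    (∃! φ : CliffordNL N (M0 * ℓ) →ₐ[ℂ] CliffordNL N ℓ,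
      ∀ (i : Fin N) (k : Fin M0) (p : Fin ℓ) (n : ℤ),
        φ (cPsi i (mixIdx k p) n) = cPsi i p (M0 * n - k.1) ∧
        φ (cPsib i (mixIdx k p) n) = cPsib i p (M0 * n + k.1)) ∧
    (∀ φ : CliffordNL N (M0 * ℓ) →ₐ[ℂ] CliffordNL N ℓ,
      (∀ (i : Fin N) (k : Fin M0) (p : Fin ℓ) (n : ℤ),
        φ (cPsi i (mixIdx k p) n) = cPsi i p (M0 * n - k.1) ∧
        φ (cPsib i (mixIdx k p) n) = cPsib i p (M0 * n + k.1)) →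
      Function.Bijective φ ∧
      (∃! Φ : FockNL N (M0 * ℓ) →ₗ[ℂ] FockNL N ℓ,
        Φ (fockVac N (M0 * ℓ)) = fockVac N ℓ ∧
        ∀ (x : CliffordNL N (M0 * ℓ)) (v : FockNL N (M0 * ℓ)),
          Φ (x • v) = φ x • Φ v) ∧
      (∀ Φ : FockNL N (M0 * ℓ) →ₗ[ℂ] FockNL N ℓ,
        Φ (fockVac N (M0 * ℓ)) = fockVac N ℓ →
        (∀ (x : CliffordNL N (M0 * ℓ)) (v : FockNL N (M0 * ℓ)),
          Φ (x • v) = φ x • Φ v) →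
        Function.Bijective Φ)) := by
  constructor
  · exact ⟨CDaux.fwd hℓ hM0, fun i k p n => CDaux.fwd_spec hℓ hM0 i k p n,
      fun φ' h' => CDaux.fwd_unique hℓ hM0 φ' h'⟩
  · intro φ hφ
    have hφf : φ = CDaux.fwd hℓ hM0 := CDaux.fwd_unique hℓ hM0 φ hφ
    subst hφf
    refine ⟨?_, ⟨CDaux.Phi hℓ hM0, ⟨CDaux.Phi_vac hℓ hM0, CDaux.Phi_smul hℓ hM0⟩,
      fun Φ' h' => CDaux.Phi_unique hℓ hM0 Φ' h'.1 h'.2⟩, ?_⟩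
    · exact Function.bijective_iff_has_inverse.mpr ⟨CDaux.bwd hℓ hM0,
        fun x => by rw [← AlgHom.comp_apply, CDaux.bwd_fwd hℓ hM0, AlgHom.id_apply],
        fun x => by rw [← AlgHom.comp_apply, CDaux.fwd_bwd hℓ hM0, AlgHom.id_apply]⟩
    · intro Φ h1 h2
      have : Φ = CDaux.Phi hℓ hM0 := CDaux.Phi_unique hℓ hM0 Φ h1 h2
      rw [this]
      exact CDaux.Phi_bijective hℓ hM0
end

section
/- Let d be a positive integer, let L₁,…,L_d be complex Lie algebras, and for each 1 ≤ i ≤ d let Wᵢ be an irreducible Lᵢ-module of countable dimension over ℂ. Then the tensor product W₁ ⊗ ⋯ ⊗ W_d, with the direct sum Lie algebra L₁ ⊕ ⋯ ⊕ L_d acting so that Lᵢ acts on the i-th tensor factor, is an irreducible (L₁ ⊕ ⋯ ⊕ L_d)-module. -/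
open Cardinal

/-- A division algebra over `ℂ` of countable dimension equals `ℂ`. -/
theorem aux_divring_surj (D : Type*) [DivisionRing D] [Algebra ℂ D]
    (hrank : Module.rank ℂ D ≤ ℵ₀) : Function.Surjective (algebraMap ℂ D) := by
  have halg : ∀ x : D, IsAlgebraic ℂ x := by
    intro x
    by_contra hx
    -- double centralizer of x is a commutative subfield containing x and ℂ
    have hxc : x ∈ Set.centralizer {x} := by
      intro m hm
      rw [Set.mem_singleton_iff] at hm
      subst hm
      rfl
    have hsub : Set.centralizer (Set.centralizer {x}) ⊆ Set.centralizer {x} := by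
      intro y hy m hm
      rw [Set.mem_singleton_iff] at hm
      subst hm
      exact hy m hxc
    let E : Subfield D :=
      { carrier := Set.centralizer (Set.centralizer {x})
        mul_mem' := fun ha hb => Set.mul_mem_centralizer ha hb
        one_mem' := Set.one_mem_centralizer
        add_mem' := fun ha hb => Set.add_mem_centralizer ha hb
        zero_mem' := Set.zero_mem_centralizer
        neg_mem' := fun ha => Set.neg_mem_centralizer ha
        inv_mem' := fun _ ha => Set.inv_mem_centralizer₀ ha }
    have hxE : x ∈ E := fun m hm => (hm x rfl).symm
    have hmapE : ∀ c : ℂ, algebraMap ℂ D c ∈ E := fun c m _ =>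
      (Algebra.commutes c m).symm
    letI : Field ↥E :=
      { (inferInstance : DivisionRing ↥E) with
        mul_comm := fun a b => Subtype.ext ((a.2 b.1 (hsub b.2)).symm) }
    letI : Algebra ℂ ↥E :=
      ((algebraMap ℂ D).codRestrict E.toSubring hmapE).toAlgebra
    let ι : ↥E →ₐ[ℂ] D :=
      { toRingHom := E.subtype
        commutes' := fun c => rfl }
    have hιinj : Function.Injective ι := Subtype.val_injective
    set x' : ↥E := ⟨x, hxE⟩ with hx'
    have htr : Transcendental ℂ x' := by
      intro h
      exact hx (by
        obtain ⟨p, hp0, hp⟩ := h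
        exact ⟨p, hp0, by
          have : Polynomial.aeval (ι x') p = ι (Polynomial.aeval x' p) :=
            Polynomial.aeval_algHom_apply ι x' p
          exact this.trans (by rw [hp, map_zero])⟩)
    have hli := (htr.linearIndependent_sub_inv).map' ι.toLinearMap
      (LinearMap.ker_eq_bot.mpr hιinj)
    have hcard := hli.cardinal_lift_le_rank
    rw [mk_complex, lift_continuum] at hcard
    have : (𝔠 : Cardinal) ≤ ℵ₀ := by
      refine le_trans hcard ?_
      calc Cardinal.lift.{0} (Module.rank ℂ D) ≤ Cardinal.lift.{0} ℵ₀ :=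
            Cardinal.lift_le.mpr hrank
        _ = ℵ₀ := by simp
    exact absurd this (not_le.mpr Cardinal.aleph0_lt_continuum)
  haveI : Algebra.IsIntegral ℂ D := ⟨fun x => (halg x).isIntegral⟩
  exact IsAlgClosed.algebraMap_bijective_of_isIntegral.2

/-- Schur's lemma for modules of countable dimension over `ℂ`. -/
theorem aux_schur {R V : Type*} [Ring R] [Algebra ℂ R] [AddCommGroup V] [Module ℂ V]
    [Module R V] [IsScalarTower ℂ R V] [IsSimpleModule R V]
    (hrank : Module.rank ℂ V ≤ ℵ₀) (φ : Module.End R V) :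
    ∃ c : ℂ, ∀ v : V, φ v = c • v := by
  classical
  haveI : SMulCommClass R ℂ V :=
    ⟨fun r c v => by
      rw [← algebraMap_smul R c v, ← mul_smul, ← Algebra.commutes c r, mul_smul,
        algebraMap_smul]⟩
  letI : DivisionRing (Module.End R V) := Module.End.instDivisionRing
  -- ℂ-algebra structure on End R V
  letI : Algebra ℂ (Module.End R V) := Module.End.instAlgebra ℂ R V
  have hrk : Module.rank ℂ (Module.End R V) ≤ ℵ₀ := by
    haveI : Nontrivial V := IsSimpleModule.nontrivial R V
    obtain ⟨v₀, hv₀⟩ := exists_ne (0 : V)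
    let ev : Module.End R V →ₗ[ℂ] V :=
      { toFun := fun ψ => ψ v₀
        map_add' := fun ψ χ => rfl
        map_smul' := fun c ψ => rfl }
    have hinj : Function.Injective ev := by
      intro ψ χ h
      by_contra hne
      have h0 : ψ - χ ≠ 0 := sub_ne_zero.mpr hne
      rcases (ψ - χ).bijective_or_eq_zero with hb | he
      · have : (ψ - χ) v₀ = 0 := by
          simpa [ev, sub_eq_zero] using h
        exact hv₀ (hb.injective (by simpa using this))
      · exact h0 he
    exact le_trans (LinearMap.rank_le_of_injective ev hinj) hrank
  obtain ⟨c, hc⟩ := aux_divring_surj (Module.End R V) hrk φ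
  exact ⟨c, fun v => by
    rw [← hc, Algebra.algebraMap_eq_smul_one]
    rfl⟩

set_option maxHeartbeats 1000000 in
set_option synthInstance.maxHeartbeats 400000 in
/-- Jacobson density theorem for a subalgebra of endomorphisms acting irreducibly on a
countable-dimensional complex vector space. -/
theorem aux_density {V : Type*} [AddCommGroup V] [Module ℂ V] [Nontrivial V]
    (A : Subalgebra ℂ (Module.End ℂ V))
    (hsimple : ∀ p : Submodule ℂ V, (∀ T ∈ A, ∀ v ∈ p, T v ∈ p) → p = ⊥ ∨ p = ⊤)
    (hrank : Module.rank ℂ V ≤ ℵ₀) :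
    ∀ (n : ℕ) (v : Fin n → V), LinearIndependent ℂ v → ∀ u : Fin n → V,
      ∃ T ∈ A, ∀ j, (T : Module.End ℂ V) (v j) = u j := by
  classical
  haveI hnt : Nontrivial (Submodule ↥A V) := by
    obtain ⟨x, hx⟩ := exists_ne (0 : V)
    refine ⟨⊥, ⊤, fun h => hx ?_⟩
    have hmem : x ∈ (⊤ : Submodule ↥A V) := trivial
    rw [← h] at hmem
    simpa using hmem
  haveI hAsimp : IsSimpleModule ↥A V := by
    refine { toIsSimpleOrder := { toNontrivial := hnt, eq_bot_or_eq_top := ?_ } }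
    intro q
    let p : Submodule ℂ V :=
      { carrier := q
        add_mem' := fun ha hb => q.add_mem ha hb
        zero_mem' := q.zero_mem
        smul_mem' := fun c v hv => by
          have h1 : (⟨algebraMap ℂ (Module.End ℂ V) c, A.algebraMap_mem c⟩ : ↥A) • v ∈ q :=
            q.smul_mem _ hv
          have h2 : (⟨algebraMap ℂ (Module.End ℂ V) c, A.algebraMap_mem c⟩ : ↥A) • v = c • v :=
            Module.algebraMap_end_apply ℂ ℂ V c v
          rwa [h2] at h1 }
    have hinv : ∀ T ∈ A, ∀ v ∈ p, T v ∈ p := fun T hT v hv =>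
      q.smul_mem (⟨T, hT⟩ : ↥A) hv
    rcases hsimple p hinv with h | h
    · left
      ext v
      simp only [Submodule.mem_bot]
      constructor
      · intro hv
        have hv' : v ∈ p := hv
        rw [h] at hv'
        simpa using hv'
      · rintro rfl; exact q.zero_mem
    · right
      ext v
      simp only [Submodule.mem_top, iff_true]
      have hv : v ∈ p := by rw [h]; trivial
      exact hv
  -- separation lemma
  have hsep : ∀ (n : ℕ) (x : Fin n → V) (y : V), LinearIndependent ℂ (Fin.snoc x y) →
      ∃ r : ↥A, (∀ i, r • x i = 0) ∧ r • y ≠ 0 := by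
    intro n
    induction n with
    | zero =>
      intro x y h
      refine ⟨1, fun i => i.elim0, ?_⟩
      have hy : y ≠ 0 := by
        have h0 := h.ne_zero (Fin.last 0)
        simpa [Fin.snoc] using h0
      simpa using hy
    | succ n ih =>
      intro x y h
      set x' : Fin n → V := Fin.init x with hx'def
      have hxsnoc : Fin.snoc x' (x (Fin.last n)) = x := Fin.snoc_init_self x
      have hxli : LinearIndependent ℂ x := (linearIndependent_fin_snoc.mp h).1
      have hyspan : y ∉ Submodule.span ℂ (Set.range x) := (linearIndependent_fin_snoc.mp h).2
      by_contra hcon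
      push_neg at hcon
      set xl := x (Fin.last n) with hxl
      set I : Submodule ↥A ↥A :=
        ⨅ i : Fin n, LinearMap.ker (LinearMap.toSpanSingleton ↥A V (x' i)) with hI
      have hmemI : ∀ r : ↥A, r ∈ I ↔ ∀ i, r • x' i = 0 := by
        intro r
        simp [hI, Submodule.mem_iInf, LinearMap.mem_ker, LinearMap.toSpanSingleton_apply]
      set J : Submodule ↥A V := Submodule.map (LinearMap.toSpanSingleton ↥A V xl) I with hJ
      have hxlsnoc : LinearIndependent ℂ (Fin.snoc x' xl) := by rw [hxsnoc]; exact hxli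
      obtain ⟨r₀, hr₀x, hr₀y⟩ := ih x' xl hxlsnoc
      have hJtop : J = ⊤ := by
        rcases eq_bot_or_eq_top J with hJb | hJt
        · exfalso
          have hmem : r₀ • xl ∈ J := ⟨r₀, (hmemI r₀).mpr hr₀x, rfl⟩
          rw [hJb] at hmem
          exact hr₀y (by simpa using hmem)
        · exact hJt
      have hwd : ∀ r s : ↥A, r ∈ I → s ∈ I → r • xl = s • xl → r • y = s • y := by
        intro r s hr hs hrs
        have h1 : ∀ i, (r - s) • x i = 0 := by
          intro i
          induction i using Fin.lastCases with
          | last => rw [sub_smul, ← hxl, hrs, sub_self]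
          | cast j =>
            show (r - s) • x' j = 0
            rw [sub_smul, (hmemI r).mp hr j, (hmemI s).mp hs j, sub_self]
        have h2 := hcon (r - s) h1
        rw [sub_smul] at h2
        exact sub_eq_zero.mp h2
      have hchoice : ∀ v : V, ∃ r : ↥A, r ∈ I ∧ r • xl = v := by
        intro v
        have hv : v ∈ J := by rw [hJtop]; trivial
        obtain ⟨r, hrI, hrv⟩ := hv
        exact ⟨r, hrI, hrv⟩
      choose ρ hρI hρ using hchoice
      let θ : V →ₗ[↥A] V :=
        { toFun := fun v => ρ v • y
          map_add' := fun v w => by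
            have h1 : ρ v + ρ w ∈ I := I.add_mem (hρI v) (hρI w)
            have h2 : (ρ v + ρ w) • xl = v + w := by rw [add_smul, hρ v, hρ w]
            have h3 := hwd (ρ (v + w)) (ρ v + ρ w) (hρI _) h1 (by rw [hρ (v + w), h2])
            simp only [h3, add_smul]
          map_smul' := fun a v => by
            have h1 : a • ρ v ∈ I := I.smul_mem a (hρI v)
            have h2 : (a • ρ v) • xl = a • v := by
              rw [smul_eq_mul, mul_smul, hρ v]
            have h3 := hwd (ρ (a • v)) (a • ρ v) (hρI _) h1 (by rw [hρ (a • v), h2])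
            simp only [h3, smul_eq_mul, mul_smul, RingHom.id_apply] }
      obtain ⟨c, hc⟩ := aux_schur (R := ↥A) (V := V) hrank θ
      have hkey : ∀ r : ↥A, r ∈ I → r • y = c • (r • xl) := by
        intro r hr
        have e1 : ρ (r • xl) • y = r • y := hwd (ρ (r • xl)) r (hρI _) hr (hρ _)
        have e2 : θ (r • xl) = c • (r • xl) := hc (r • xl)
        have e3 : θ (r • xl) = ρ (r • xl) • y := rfl
        rw [← e1, ← e3, e2]
      set z := y - c • xl with hz
      have hzsnoc : LinearIndependent ℂ (Fin.snoc x' z) := by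
        rw [linearIndependent_fin_snoc]
        refine ⟨(linearIndependent_fin_snoc.mp hxlsnoc).1, ?_⟩
        intro hzmem
        apply hyspan
        have hxlmem : xl ∈ Submodule.span ℂ (Set.range x) :=
          Submodule.subset_span ⟨Fin.last n, rfl⟩
        have hx'sub : Submodule.span ℂ (Set.range x') ≤ Submodule.span ℂ (Set.range x) :=
          Submodule.span_mono (by rintro _ ⟨i, rfl⟩; exact ⟨i.castSucc, rfl⟩)
        have hy2 : y = z + c • xl := by rw [hz, sub_add_cancel]
        rw [hy2]
        exact Submodule.add_mem _ (hx'sub hzmem) (Submodule.smul_mem _ _ hxlmem)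
      obtain ⟨r₁, hr₁x, hr₁z⟩ := ih x' z hzsnoc
      apply hr₁z
      have hr₁I : r₁ ∈ I := (hmemI r₁).mpr hr₁x
      rw [hz, smul_sub, hkey r₁ hr₁I, smul_comm r₁ c xl, sub_self]
  -- conclusion
  intro n v hv u
  cases n with
  | zero => exact ⟨0, A.toSubring.zero_mem, fun j => j.elim0⟩
  | succ m =>
    have hr : ∀ j : Fin (m + 1), ∃ r : ↥A,
        (∀ i : Fin m, r • v (j.succAbove i) = 0) ∧ r • v j ≠ 0 := by
      intro j
      apply hsep m (fun i => v (j.succAbove i)) (v j)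
      let e : Fin (m + 1) → Fin (m + 1) := fun k => Fin.lastCases j j.succAbove k
      have he : Function.Injective e := by
        intro a b hab
        induction a using Fin.lastCases with
        | last =>
          induction b using Fin.lastCases with
          | last => rfl
          | cast bi =>
            simp only [e, Fin.lastCases_last, Fin.lastCases_castSucc] at hab
            exact absurd hab.symm (Fin.succAbove_ne j bi)
        | cast ai =>
          induction b using Fin.lastCases with
          | last =>
            simp only [e, Fin.lastCases_last, Fin.lastCases_castSucc] at hab
            exact absurd hab (Fin.succAbove_ne j ai)
          | cast bi =>
            simp only [e, Fin.lastCases_castSucc] at hab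
            exact congrArg Fin.castSucc (Fin.succAbove_right_injective hab)
      have heq : Fin.snoc (fun i => v (j.succAbove i)) (v j) = v ∘ e := by
        funext k
        induction k using Fin.lastCases with
        | last => simp [e]
        | cast i => simp [e]
      rw [heq]
      exact hv.comp e he
    choose r hr0 hrne using hr
    have hs : ∀ j, ∃ s : ↥A, s • (r j • v j) = u j := fun j =>
      IsSimpleModule.toSpanSingleton_surjective ↥A (hrne j) (u j)
    choose s hs using hs
    refine ⟨(∑ j, s j * r j : ↥A), (∑ j, s j * r j : ↥A).2, fun k => ?_⟩
    have hT : ((∑ j, s j * r j : ↥A) : Module.End ℂ V) (v k) =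
        (∑ j, s j * r j : ↥A) • v k := rfl
    rw [hT, Finset.sum_smul]
    rw [Finset.sum_eq_single k]
    · rw [mul_smul]; exact hs k
    · intro j _ hjk
      obtain ⟨i, hi⟩ := Fin.exists_succAbove_eq (Ne.symm hjk)
      rw [mul_smul, ← hi, hr0 j i, smul_zero]
    · intro hk; exact absurd (Finset.mem_univ k) hk

open scoped DirectSum TensorProduct

set_option maxHeartbeats 2000000 in
set_option synthInstance.maxHeartbeats 400000 in
/-- a tensor product of irreducible modules of countable dimension over the
complex numbers, viewed as a module for the direct sum Lie algebra (each factor acting in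
its own tensor slot), is irreducible. -/
theorem tensor_product_of_irreducible_isIrreducible (d : ℕ) (hd : 0 < d)
    (L : Fin d → Type*) [∀ i, LieRing (L i)] [∀ i, LieAlgebra ℂ (L i)]
    (W : Fin d → Type*) [∀ i, AddCommGroup (W i)] [∀ i, Module ℂ (W i)]
    [∀ i, LieRingModule (L i) (W i)] [∀ i, LieModule ℂ (L i) (W i)]
    (hirr : ∀ i, LieModule.IsIrreducible ℂ (L i) (W i))
    (hcount : ∀ i, ∃ s : Set (W i), s.Countable ∧ Submodule.span ℂ s = ⊤)
    [LieRingModule (⨁ i, L i) (⨂[ℂ] i, W i)]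
    [LieModule ℂ (⨁ i, L i) (⨂[ℂ] i, W i)]
    (hact : ∀ (i : Fin d) (x : L i) (w : ∀ i, W i),
      ⁅(DirectSum.of L i x : ⨁ i, L i), PiTensorProduct.tprod ℂ w⁆ =
        PiTensorProduct.tprod ℂ (Function.update w i ⁅x, w i⁆)) :
    LieModule.IsIrreducible ℂ (⨁ i, L i) (⨂[ℂ] i, W i) := by
  classical
  -- notation
  set T : MultilinearMap ℂ W (⨂[ℂ] i, W i) := PiTensorProduct.tprod ℂ with hTdef
  -- each W i is nontrivial
  have hWnt : ∀ i, Nontrivial (W i) := by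
    intro i
    haveI := hirr i
    by_contra hn
    rw [not_nontrivial_iff_subsingleton] at hn
    have hbt : (⊥ : LieSubmodule ℂ (L i) (W i)) = ⊤ := by
      ext m
      simp only [LieSubmodule.mem_bot, LieSubmodule.mem_top, iff_true]
      exact Subsingleton.elim m 0
    exact bot_ne_top hbt
  -- countable rank
  have hrk : ∀ i, Module.rank ℂ (W i) ≤ Cardinal.aleph0 := by
    intro i
    obtain ⟨s, hs, hspan⟩ := hcount i
    have h1 : Module.rank ℂ ↥(Submodule.span ℂ s) ≤ Cardinal.mk s := rank_span_le s
    rw [hspan] at h1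
    have h2 : Cardinal.mk s ≤ Cardinal.aleph0 := by
      haveI := hs.to_subtype
      exact Cardinal.mk_le_aleph0
    calc Module.rank ℂ (W i) = Module.rank ℂ ↥(⊤ : Submodule ℂ (W i)) := (rank_top ℂ (W i)).symm
      _ ≤ Cardinal.aleph0 := le_trans h1 h2
  -- nonvanishing of pure tensors with nonzero components
  have htpne : ∀ w : (∀ i, W i), (∀ i, w i ≠ 0) → T w ≠ 0 := by
    intro w hw h0
    have hf : ∀ i, ∃ f : Module.Dual ℂ (W i), f (w i) = 1 := by
      intro i
      have h1 : ¬ ∀ φ : Module.Dual ℂ (W i), φ (w i) = 0 := by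
        rw [Module.forall_dual_apply_eq_zero_iff]
        exact hw i
      push_neg at h1
      obtain ⟨g, hg⟩ := h1
      exact ⟨(g (w i))⁻¹ • g, by simp [inv_mul_cancel₀ hg]⟩
    choose f hf using hf
    have := congrArg (PiTensorProduct.lift ((MultilinearMap.mkPiAlgebra ℂ (Fin d) ℂ).compLinearMap f)) h0
    rw [map_zero] at this
    rw [hTdef] at this
    rw [PiTensorProduct.lift.tprod] at this
    rw [MultilinearMap.compLinearMap_apply, MultilinearMap.mkPiAlgebra_apply] at this
    simp only [hf, Finset.prod_const_one] at this
    exact one_ne_zero this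
  obtain ⟨w₀, hw₀⟩ : ∃ w₀ : (∀ i, W i), ∀ i, w₀ i ≠ 0 := by
    have : ∀ i, ∃ x : W i, x ≠ 0 := fun i => by haveI := hWnt i; exact exists_ne 0
    choose w₀ hw₀ using this
    exact ⟨w₀, hw₀⟩
  haveI hnt : Nontrivial (⨂[ℂ] i, W i) := ⟨T w₀, 0, htpne w₀ hw₀⟩
  -- the slot subalgebras and their density
  set Ai : ∀ i : Fin d, Subalgebra ℂ (Module.End ℂ (W i)) :=
    fun i => Algebra.adjoin ℂ (Set.range (LieModule.toEnd ℂ (L i) (W i))) with hAidef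
  have hAsimp : ∀ (i : Fin d) (p : Submodule ℂ (W i)),
      (∀ S ∈ Ai i, ∀ v ∈ p, S v ∈ p) → p = ⊥ ∨ p = ⊤ := by
    intro i p hp
    haveI := hirr i
    have hlie : ∀ (x : L i) (m : W i), m ∈ p → ⁅x, m⁆ ∈ p := by
      intro x m hm
      have h1 := hp (LieModule.toEnd ℂ (L i) (W i) x)
        (Algebra.subset_adjoin ⟨x, rfl⟩) m hm
      rwa [LieModule.toEnd_apply_apply] at h1
    let q : LieSubmodule ℂ (L i) (W i) :=
      { p with lie_mem := fun {x m} hm => hlie x m hm }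
    have hqp : ∀ v : W i, v ∈ q ↔ v ∈ p := fun v => Iff.rfl
    rcases (hirr i).eq_bot_or_eq_top q with h | h
    · left
      ext v
      rw [Submodule.mem_bot, ← hqp, h, LieSubmodule.mem_bot]
    · right
      ext v
      simp only [Submodule.mem_top, iff_true]
      rw [← hqp, h]
      exact LieSubmodule.mem_top v
  have hdens : ∀ (i : Fin d) (n : ℕ) (v : Fin n → W i), LinearIndependent ℂ v →
      ∀ u : Fin n → W i, ∃ S ∈ Ai i, ∀ j, (S : Module.End ℂ (W i)) (v j) = u j := by
    intro i
    haveI := hWnt i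
    exact aux_density (Ai i) (hAsimp i) (hrk i)
  -- main goal
  constructor
  intro N
  rcases eq_or_ne N ⊥ with hbot | hbot
  · left; exact hbot
  right
  -- a nonzero element of N
  obtain ⟨t₀, ht₀N, ht₀⟩ : ∃ t₀, t₀ ∈ N ∧ t₀ ≠ 0 := by
    by_contra hcon
    push_neg at hcon
    exact hbot ((LieSubmodule.eq_bot_iff N).mpr hcon)
  -- the "good" subalgebra for slot i: operators that lift to slot-i operators preserving N
  have hGood : ∀ (i : Fin d) (S : Module.End ℂ (W i)), S ∈ Ai i →
      ∃ Y : Module.End ℂ (⨂[ℂ] i, W i),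
        (∀ w : ∀ i, W i, Y (T w) = T (Function.update w i (S (w i)))) ∧
        ∀ t ∈ N, Y t ∈ N := by
    intro i
    let G : Subalgebra ℂ (Module.End ℂ (W i)) :=
      { carrier := {S | ∃ Y : Module.End ℂ (⨂[ℂ] i, W i),
          (∀ w : ∀ i, W i, Y (T w) = T (Function.update w i (S (w i)))) ∧
          ∀ t ∈ N, Y t ∈ N}
        mul_mem' := by
          rintro S₁ S₂ ⟨Y₁, hY₁, hY₁N⟩ ⟨Y₂, hY₂, hY₂N⟩
          refine ⟨Y₁ * Y₂, fun w => ?_, fun t ht => hY₁N _ (hY₂N t ht)⟩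
          have h1 : (Y₁ * Y₂) (T w) = Y₁ (Y₂ (T w)) := rfl
          rw [h1, hY₂ w, hY₁ (Function.update w i (S₂ (w i))), Function.update_idem,
            Function.update_self]
          rfl
        one_mem' := by
          refine ⟨1, fun w => ?_, fun t ht => ht⟩
          have h1 : (1 : Module.End ℂ (⨂[ℂ] i, W i)) (T w) = T w := rfl
          rw [h1]
          congr 1
          have h2 : (1 : Module.End ℂ (W i)) (w i) = w i := rfl
          rw [h2, Function.update_eq_self]
        add_mem' := by
          rintro S₁ S₂ ⟨Y₁, hY₁, hY₁N⟩ ⟨Y₂, hY₂, hY₂N⟩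
          refine ⟨Y₁ + Y₂, fun w => ?_, fun t ht => N.add_mem (hY₁N t ht) (hY₂N t ht)⟩
          have h1 : (Y₁ + Y₂) (T w) = Y₁ (T w) + Y₂ (T w) := rfl
          rw [h1, hY₁ w, hY₂ w]
          have h2 : (S₁ + S₂) (w i) = S₁ (w i) + S₂ (w i) := rfl
          rw [h2, MultilinearMap.map_update_add]
        zero_mem' := by
          refine ⟨0, fun w => ?_, fun t ht => N.zero_mem⟩
          have h1 : (0 : Module.End ℂ (⨂[ℂ] i, W i)) (T w) = 0 := rfl
          have h2 : (0 : Module.End ℂ (W i)) (w i) = 0 := rfl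
          rw [h1, h2]
          exact (MultilinearMap.map_coord_zero T i (Function.update_self i 0 w)).symm
        algebraMap_mem' := by
          intro c
          refine ⟨algebraMap ℂ (Module.End ℂ (⨂[ℂ] i, W i)) c, fun w => ?_,
            fun t ht => ?_⟩
          · rw [Module.algebraMap_end_apply ℂ ℂ _ c, Module.algebraMap_end_apply ℂ ℂ _ c]
            rw [MultilinearMap.map_update_smul, Function.update_eq_self]
          · rw [Module.algebraMap_end_apply ℂ ℂ _ c]
            exact N.smul_mem c ht }
    have hle : Ai i ≤ G := by
      rw [hAidef]
      apply Algebra.adjoin_le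
      rintro _ ⟨x, rfl⟩
      refine ⟨LieModule.toEnd ℂ (⨁ i, L i) (⨂[ℂ] i, W i) (DirectSum.of L i x),
        fun w => ?_, fun t ht => ?_⟩
      · rw [LieModule.toEnd_apply_apply, hTdef, hact i x w, LieModule.toEnd_apply_apply]
      · rw [LieModule.toEnd_apply_apply]
        exact N.lie_mem ht
    intro S hS
    exact hle hS
  -- key induction on the length of representations by sums of pure tensors
  have key : ∀ (m : ℕ) (s : Multiset (∀ i, W i)),
      s.card = m → (s.map T).sum ∈ N → (s.map T).sum ≠ 0 →
      ∀ u : ∀ i, W i, T u ∈ N := by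
    intro m
    induction m using Nat.strong_induction_on with
    | _ m ih =>
      rcases m with _ | m
      · intro s hcard hmem hne u
        rw [Multiset.card_eq_zero] at hcard
        subst hcard
        simp at hne
      intro s hcard hmem hne u
      obtain ⟨w₁, s₁, rfl⟩ : ∃ w₁ s₁, s = w₁ ::ₘ s₁ := by
        have hpos : s ≠ 0 := by
          intro h; rw [h] at hcard; simp at hcard
        obtain ⟨w₁, hw₁⟩ := Multiset.exists_mem_of_ne_zero hpos
        obtain ⟨s₁, hs₁⟩ := Multiset.exists_cons_of_mem hw₁
        exact ⟨w₁, s₁, hs₁⟩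
      rw [Multiset.card_cons] at hcard
      by_cases hz₁ : ∃ i, w₁ i = 0
      · -- drop the first (zero) term
        obtain ⟨i, hi⟩ := hz₁
        have hzero : T w₁ = 0 := MultilinearMap.map_coord_zero T i hi
        have hsum : ((w₁ ::ₘ s₁).map T).sum = (s₁.map T).sum := by
          rw [Multiset.map_cons, Multiset.sum_cons, hzero, zero_add]
        rw [hsum] at hmem hne
        exact ih m (Nat.lt_succ_self m) s₁ (by omega) hmem hne u
      push_neg at hz₁
      rcases s₁.empty_or_exists_mem with hs₁e | ⟨w₂, hw₂⟩
      · -- single pure tensor in N: fill slots one at a time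
        subst hs₁e
        simp only [Multiset.map_cons, Multiset.map_zero, Multiset.sum_cons,
          Multiset.sum_zero, add_zero] at hmem hne
        set mix : ℕ → ∀ i : Fin d, W i :=
          fun k i => if (i : ℕ) < k then u i else w₁ i with hmix
        have fill : ∀ k : ℕ, k ≤ d → T (mix k) ∈ N := by
          intro k
          induction k with
          | zero =>
            intro _
            have h0 : mix 0 = w₁ := by
              funext i; simp [hmix]
            rw [h0]; exact hmem
          | succ k ihk =>
            intro hk1
            have hk : k < d := hk1
            set i₀ : Fin d := ⟨k, hk⟩ with hi₀
            have hmixmem := ihk (le_of_lt hk)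
            have hli : LinearIndependent ℂ (fun _ : Fin 1 => w₁ i₀) :=
              LinearIndependent.of_subsingleton (0 : Fin 1) (hz₁ i₀)
            obtain ⟨S, hSA, hSv⟩ := hdens i₀ 1 (fun _ => w₁ i₀) hli (fun _ => u i₀)
            obtain ⟨Y, hYf, hYN⟩ := hGood i₀ S hSA
            have h2 := hYN _ hmixmem
            rw [hYf] at h2
            have h5 : Function.update (mix k) i₀ (S (mix k i₀)) = mix (k + 1) := by
              have h3 : mix k i₀ = w₁ i₀ := by simp [hmix, hi₀]
              rw [h3, hSv 0]
              funext j
              rcases eq_or_ne j i₀ with rfl | hj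
              · rw [Function.update_self]
                have hlt : ((i₀ : Fin d) : ℕ) < k + 1 := by simp [hi₀]
                simp [hmix, hlt]
              · rw [Function.update_of_ne hj]
                have hjk : (j : ℕ) ≠ k := fun h => hj (Fin.ext (by simp [hi₀, h]))
                by_cases hlt : (j : ℕ) < k
                · simp [hmix, hlt, Nat.lt_succ_of_lt hlt]
                · have h6 : ¬ (j : ℕ) < k + 1 := by omega
                  simp [hmix, hlt, h6]
            rw [h5] at h2
            exact h2
        have hfin := fill d (le_refl d)
        have hud : mix d = u := by
          funext i; simp [hmix, i.isLt]
        rwa [hud] at hfin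
      -- at least two terms
      obtain ⟨s₂, rfl⟩ := Multiset.exists_cons_of_mem hw₂
      rw [Multiset.card_cons] at hcard
      have hcard₂ : s₂.card = m - 1 := by omega
      have hm1 : 1 ≤ m := by omega
      by_cases hz₂ : ∃ i, w₂ i = 0
      · obtain ⟨i, hi⟩ := hz₂
        have hzero : T w₂ = 0 := MultilinearMap.map_coord_zero T i hi
        have hsum : ((w₁ ::ₘ w₂ ::ₘ s₂).map T).sum = ((w₁ ::ₘ s₂).map T).sum := by
          simp only [Multiset.map_cons, Multiset.sum_cons, hzero, zero_add]
        rw [hsum] at hmem hne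
        exact ih m (Nat.lt_succ_self m) (w₁ ::ₘ s₂) (by simp [hcard₂]; omega) hmem hne u
      push_neg at hz₂
      by_cases hindep : ∃ i, ∀ c : ℂ, c • w₁ i ≠ w₂ i
      · obtain ⟨i, hi⟩ := hindep
        have hli : LinearIndependent ℂ ![w₂ i, w₁ i] := by
          rw [linearIndependent_fin2]
          constructor
          · simpa using hz₁ i
          · intro a
            simpa using hi a
        obtain ⟨S, hSA, hSv⟩ := hdens i 2 ![w₂ i, w₁ i] hli ![0, w₁ i]
        obtain ⟨S', hS'A, hS'v⟩ := hdens i 2 ![w₂ i, w₁ i] hli ![w₂ i, 0]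
        have hS0 : S (w₂ i) = 0 := by simpa using hSv 0
        have hS1 : S (w₁ i) = w₁ i := by simpa using hSv 1
        have hS'0 : S' (w₂ i) = w₂ i := by simpa using hS'v 0
        have hS'1 : S' (w₁ i) = 0 := by simpa using hS'v 1
        obtain ⟨Y, hYf, hYN⟩ := hGood i S hSA
        obtain ⟨Y', hY'f, hY'N⟩ := hGood i S' hS'A
        set updS : (∀ i', W i') → (∀ i', W i') :=
          fun w => Function.update w i (S (w i)) with hupdS
        set updS' : (∀ i', W i') → (∀ i', W i') :=
          fun w => Function.update w i (S' (w i)) with hupdS'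
        set s := w₁ ::ₘ w₂ ::ₘ s₂ with hs
        have hY : ∀ (Z : Module.End ℂ (⨂[ℂ] i, W i))
            (f : (∀ i', W i') → (∀ i', W i')),
            (∀ w, Z (T w) = T (f w)) → Z ((s.map T).sum) = ((s.map f).map T).sum := by
          intro Z f hZ
          rw [map_multiset_sum, Multiset.map_map, Multiset.map_map]
          congr 1
          apply Multiset.map_congr rfl
          intro w _
          exact hZ w
        have ht' : Y ((s.map T).sum) = (((w₁ ::ₘ s₂).map updS).map T).sum := by
          rw [hY Y updS hYf]
          rw [hs]
          simp only [Multiset.map_cons, Multiset.sum_cons]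
          have hzero : T (updS w₂) = 0 := by
            apply MultilinearMap.map_coord_zero T i
            rw [hupdS]
            simp only [Function.update_self]
            exact hS0
          rw [hzero, zero_add]
        have ht'' : Y' ((s.map T).sum) = (((w₂ ::ₘ s₂).map updS').map T).sum := by
          rw [hY Y' updS' hY'f]
          rw [hs]
          simp only [Multiset.map_cons, Multiset.sum_cons]
          have hzero : T (updS' w₁) = 0 := by
            apply MultilinearMap.map_coord_zero T i
            rw [hupdS']
            simp only [Function.update_self]
            exact hS'1
          rw [hzero, zero_add]
        by_cases hY0 : Y ((s.map T).sum) = 0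
        · by_cases hY'0 : Y' ((s.map T).sum) = 0
          · -- both vanish: the original sum shortens by two
            set updR : (∀ i', W i') → (∀ i', W i') :=
              fun w => Function.update w i (w i - S (w i) - S' (w i)) with hupdR
            have hsplit : ∀ w : ∀ i', W i',
                T (updR w) = T w - T (updS w) - T (updS' w) := by
              intro w
              rw [hupdR, hupdS, hupdS']
              simp only []
              rw [MultilinearMap.map_update_sub, MultilinearMap.map_update_sub, Function.update_eq_self]
            have htot : ((s.map updR).map T).sum
                = (s.map T).sum - Y ((s.map T).sum) - Y' ((s.map T).sum) := by
              rw [hY Y updS hYf, hY Y' updS' hY'f]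
              rw [Multiset.map_map, Multiset.map_map, Multiset.map_map]
              rw [← Multiset.sum_map_sub, ← Multiset.sum_map_sub]
              apply congrArg
              apply Multiset.map_congr rfl
              intro w _
              exact hsplit w
            rw [hY0, hY'0, sub_zero, sub_zero] at htot
            have hzR₁ : T (updR w₁) = 0 := by
              apply MultilinearMap.map_coord_zero T i
              rw [hupdR]
              simp only [Function.update_self]
              rw [hS1, hS'1, sub_zero, sub_self]
            have hzR₂ : T (updR w₂) = 0 := by
              apply MultilinearMap.map_coord_zero T i
              rw [hupdR]
              simp only [Function.update_self]
              rw [hS0, hS'0, sub_zero, sub_self]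
            have hshort : ((s₂.map updR).map T).sum = (s.map T).sum := by
              rw [← htot, hs]
              simp only [Multiset.map_cons, Multiset.sum_cons, hzR₁, hzR₂, zero_add]
            refine ih (m - 1) (by omega) (s₂.map updR) (by simp [hcard₂]) ?_ ?_ u
            · rw [hshort]; exact hmem
            · rw [hshort]; exact hne
          · -- Y' t ≠ 0, shorter representation
            refine ih m (Nat.lt_succ_self m) ((w₂ ::ₘ s₂).map updS')
              (by simp [hcard₂]; omega) ?_ ?_ u
            · rw [← ht'']; exact hY'N _ hmem
            · rw [← ht'']; exact hY'0
        · refine ih m (Nat.lt_succ_self m) ((w₁ ::ₘ s₂).map updS)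
            (by simp [hcard₂]; omega) ?_ ?_ u
          · rw [← ht']; exact hYN _ hmem
          · rw [← ht']; exact hY0
      · -- proportional in every slot: combine the two terms
        push_neg at hindep
        choose c hc using hindep
        have hw₂eq : T w₂ = (∏ i, c i) • T w₁ := by
          have h1 : w₂ = fun i => c i • w₁ i := by
            funext i; rw [← hc i]
          rw [h1, MultilinearMap.map_smul_univ]
        set i₀ : Fin d := ⟨0, hd⟩ with hi₀
        set w₁' := Function.update w₁ i₀ ((1 + ∏ i, c i) • w₁ i₀) with hw₁'
        have hw₁'eq : T w₁' = (1 + ∏ i, c i) • T w₁ := by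
          rw [hw₁', MultilinearMap.map_update_smul, Function.update_eq_self]
        have hsum : ((w₁ ::ₘ w₂ ::ₘ s₂).map T).sum = ((w₁' ::ₘ s₂).map T).sum := by
          simp only [Multiset.map_cons, Multiset.sum_cons]
          rw [hw₂eq, hw₁'eq, add_smul, one_smul, add_assoc]
        rw [hsum] at hmem hne
        exact ih m (Nat.lt_succ_self m) (w₁' ::ₘ s₂) (by simp [hcard₂]; omega) hmem hne u
  -- produce a multiset representation of t₀
  obtain ⟨s, hs⟩ : ∃ s : Multiset (∀ i, W i), (s.map T).sum = t₀ := by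
    have htop : t₀ ∈ Submodule.span ℂ (Set.range (PiTensorProduct.tprod ℂ)) := by
      rw [PiTensorProduct.span_tprod_eq_top]; trivial
    rw [Submodule.mem_span_set] at htop
    obtain ⟨cf, hsupp, hsum⟩ := htop
    set i₀ : Fin d := ⟨0, hd⟩ with hi₀
    refine ⟨cf.support.attach.val.map (fun x =>
      Function.update (Classical.choose (hsupp x.2)) i₀
        (cf x.1 • (Classical.choose (hsupp x.2)) i₀)), ?_⟩
    rw [Multiset.map_map]
    have hterm : ∀ x : {x // x ∈ cf.support},
        (T ∘ fun x : {x // x ∈ cf.support} =>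
          Function.update (Classical.choose (hsupp x.2)) i₀
            (cf x.1 • (Classical.choose (hsupp x.2)) i₀)) x = cf x.1 • x.1 := by
      intro x
      have hch : PiTensorProduct.tprod ℂ (Classical.choose (hsupp x.2)) = x.1 :=
        Classical.choose_spec (hsupp x.2)
      show T (Function.update (Classical.choose (hsupp x.2)) i₀
        (cf x.1 • (Classical.choose (hsupp x.2)) i₀)) = cf x.1 • x.1
      rw [MultilinearMap.map_update_smul, Function.update_eq_self]
      rw [hTdef, hch]
    rw [Multiset.map_congr rfl (fun x _ => hterm x)]
    have : (Multiset.map (fun x : {x // x ∈ cf.support} => cf x.1 • x.1)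
        cf.support.attach.val).sum = ∑ x ∈ cf.support.attach, cf x.1 • x.1 := rfl
    rw [this, Finset.sum_attach cf.support (fun y => cf y • y)]
    exact hsum
  -- conclude
  have hall : ∀ u : ∀ i, W i, T u ∈ N := by
    apply key s.card s rfl
    · rw [hs]; exact ht₀N
    · rw [hs]; exact ht₀
  ext z
  simp only [LieSubmodule.mem_top, iff_true]
  have hz : z ∈ Submodule.span ℂ (Set.range (PiTensorProduct.tprod ℂ)) := by
    rw [PiTensorProduct.span_tprod_eq_top]; trivial
  have hle : Submodule.span ℂ (Set.range (PiTensorProduct.tprod ℂ)) ≤ N.toSubmodule := by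
    rw [Submodule.span_le]
    rintro _ ⟨w, rfl⟩
    exact hall w
  exact hle hz
end
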